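/- Let x1, x0 be Bessel sequences in X and u0 a Bessel sequence in U with synthesis operators Ξ1, Ξ0, Υ0, and suppose the data-generation assumption holds. Assume dim U < ∞ and fix γ ∈ (0,1). Then the following are equivalent. (i) The data (x1,x0,u0) are informative for stabilization with decay rate γ, and there exists c ≥ 0 such that Ξ0*Ξ0 ≤ c² (Ξ0*Ξ0)² as operators on ℓ²(ℕ). (ii) The sequence x0 is a frame for X, and there exists a right inverse Ξ0† ∈ L(X, ℓ²(ℕ)) of Ξ0 (Ξ0 Ξ0† = I) such that Ξ1 Ξ0† is power stable with decay rate γ. -/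

import Mathlib

noncomputable section
open ContinuousLinearMap

/-- `ℓ²(ℕ)`: the Hilbert space of square-summable complex sequences. -/
abbrev l2 : Type := lp (fun _ : ℕ => ℂ) 2

/-- `η` is a Bessel sequence in `Y`. -/
def Bessel {Y : Type} [NormedAddCommGroup Y] [InnerProductSpace ℂ Y] (η : ℕ → Y) : Prop :=
  ∃ α : ℝ, 0 < α ∧ ∀ y : Y, ∑' k : ℕ, ‖(inner ℂ y (η k) : ℂ)‖ ^ 2 ≤ α * ‖y‖ ^ 2

/-- `η` is a frame for `Y`. -/
def IsFrame {Y : Type} [NormedAddCommGroup Y] [InnerProductSpace ℂ Y] (η : ℕ → Y) : Prop :=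
  ∃ α β : ℝ, 0 < α ∧ 0 < β ∧ ∀ y : Y,
    β * ‖y‖ ^ 2 ≤ ∑' k : ℕ, ‖(inner ℂ y (η k) : ℂ)‖ ^ 2 ∧
      ∑' k : ℕ, ‖(inner ℂ y (η k) : ℂ)‖ ^ 2 ≤ α * ‖y‖ ^ 2

/-- `T` is the synthesis operator associated with `η`: `T w = ∑ₖ wₖ • ηₖ`. -/
def IsSynthesis {Y : Type} [NormedAddCommGroup Y] [InnerProductSpace ℂ Y] (η : ℕ → Y)
    (T : l2 →L[ℂ] Y) : Prop :=
  ∀ w : l2, HasSum (fun k : ℕ => w k • η k) (T w)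


set_option linter.unusedSectionVars false

section Aux
variable {X : Type} [NormedAddCommGroup X] [InnerProductSpace ℂ X] [CompleteSpace X]
variable {U : Type} [NormedAddCommGroup U] [InnerProductSpace ℂ U] [CompleteSpace U]

lemma synthesis_single {η : ℕ → X} {T : l2 →L[ℂ] X} (hT : IsSynthesis η T) (k : ℕ) :
    T (lp.single 2 k 1) = η k := by
  refine (hT _).unique ?_
  convert hasSum_ite_eq k (η k) using 2 with j
  by_cases h : j = k
  · subst h; simp [lp.single_apply_self]
  · simp [lp.single_apply_ne _ _ _ h, h]

lemma adj_apply {η : ℕ → X} {T : l2 →L[ℂ] X} (hT : IsSynthesis η T) (y : X) (k : ℕ) :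
    (adjoint T y) k = (inner ℂ (η k) y : ℂ) := by
  have h1 : (adjoint T y) k = (inner ℂ (lp.single 2 k (1:ℂ)) (adjoint T y) : ℂ) := by
    rw [lp.inner_single_left]
    simp [RCLike.inner_apply]
  rw [h1, adjoint_inner_right, synthesis_single hT]

lemma tsum_adj {η : ℕ → X} {T : l2 →L[ℂ] X} (hT : IsSynthesis η T) (y : X) :
    ∑' k : ℕ, ‖(inner ℂ y (η k) : ℂ)‖ ^ 2 = ‖adjoint T y‖ ^ 2 := by
  have h2 : ‖adjoint T y‖ ^ (2:ℝ) = ∑' k : ℕ, ‖(adjoint T y) k‖ ^ (2:ℝ) := by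
    simpa using lp.norm_rpow_eq_tsum (p := 2) (by norm_num) (adjoint T y)
  rw [← Real.rpow_natCast (‖adjoint T y‖) 2]
  push_cast
  rw [h2]
  congr 1
  funext k
  rw [adj_apply hT, ← norm_inner_symm, ← Real.rpow_natCast]
  norm_num

lemma sum_identity {x1 x0 : ℕ → X} {u0 : ℕ → U}
    {Ξ1 Ξ0 : l2 →L[ℂ] X} {Υ0 : l2 →L[ℂ] U}
    (hΞ1 : IsSynthesis x1 Ξ1) (hΞ0 : IsSynthesis x0 Ξ0) (hΥ0 : IsSynthesis u0 Υ0)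
    (A : X →L[ℂ] X) (B : U →L[ℂ] X)
    (hcons : ∀ k : ℕ, x1 k = A (x0 k) + B (u0 k)) (w : l2) :
    A (Ξ0 w) + B (Υ0 w) = Ξ1 w := by
  have hA : HasSum (fun k : ℕ => w k • A (x0 k)) (A (Ξ0 w)) := by
    simpa using (hΞ0 w).mapL A
  have hB : HasSum (fun k : ℕ => w k • B (u0 k)) (B (Υ0 w)) := by
    simpa using (hΥ0 w).mapL B
  have h := hA.add hB
  refine HasSum.unique ?_ (hΞ1 w)
  convert h using 2 with k
  rw [hcons k, smul_add]

lemma scaling_zero (F R : X →L[ℂ] X) (C : ℝ)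
    (h : ∀ n : ℕ, ‖F + (n:ℂ) • R‖ ≤ C) : R = 0 := by
  have hb : ∀ n : ℕ, (n:ℝ) * ‖R‖ ≤ C + ‖F‖ := by
    intro n
    have h1 : ‖(n:ℂ) • R‖ ≤ ‖F + (n:ℂ) • R‖ + ‖F‖ := by
      have := norm_sub_le (F + (n:ℂ) • R) F
      simpa using this
    have h2 : ‖(n:ℂ) • R‖ = (n:ℝ) * ‖R‖ := by rw [norm_smul]; simp
    nlinarith [h n, norm_nonneg F]
  by_contra hR
  have hRn : 0 < ‖R‖ := norm_pos_iff.mpr hR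
  obtain ⟨n, hn⟩ := exists_nat_gt ((C + ‖F‖) / ‖R‖)
  have := hb n
  rw [div_lt_iff₀ hRn] at hn
  linarith

lemma pert {x1 x0 : ℕ → X} {u0 : ℕ → U}
    (As : X →L[ℂ] X) (Bs : U →L[ℂ] X)
    (hgen : ∀ k : ℕ, x1 k = As (x0 k) + Bs (u0 k))
    (K : X →L[ℂ] U) (M γ : ℝ)
    (hKM : ∀ (A : X →L[ℂ] X) (B : U →L[ℂ] X),
      (∀ k : ℕ, x1 k = A (x0 k) + B (u0 k)) →
      ∀ k : ℕ, ‖(A + B.comp K) ^ k‖ ≤ M * γ ^ k)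
    (Δ : X →L[ℂ] X) (Γ : U →L[ℂ] X)
    (hzero : ∀ k : ℕ, Δ (x0 k) + Γ (u0 k) = 0) :
    Δ + Γ.comp K = 0 := by
  refine scaling_zero (As + Bs.comp K) _ (M * γ) (fun n => ?_)
  have hcons : ∀ k : ℕ, x1 k = (As + (n:ℂ) • Δ) (x0 k) + (Bs + (n:ℂ) • Γ) (u0 k) := by
    intro k
    have := hzero k
    simp only [add_apply, smul_apply, hgen k]
    rw [show As (x0 k) + (n:ℂ) • Δ (x0 k) + (Bs (u0 k) + (n:ℂ) • Γ (u0 k))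
        = As (x0 k) + Bs (u0 k) + (n:ℂ) • (Δ (x0 k) + Γ (u0 k)) by rw [smul_add]; abel]
    rw [this, smul_zero, add_zero]
  have := hKM _ _ hcons 1
  simp only [pow_one] at this
  convert this using 2
  rw [add_comp, smul_comp, smul_add]
  abel

lemma hstar_lemma {x1 x0 : ℕ → X} {u0 : ℕ → U} [Nontrivial X]
    {Ξ0 : l2 →L[ℂ] X} {Υ0 : l2 →L[ℂ] U}
    (hΞ0 : IsSynthesis x0 Ξ0) (hΥ0 : IsSynthesis u0 Υ0)
    (As : X →L[ℂ] X) (Bs : U →L[ℂ] X)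
    (hgen : ∀ k : ℕ, x1 k = As (x0 k) + Bs (u0 k))
    (K : X →L[ℂ] U) (M γ : ℝ)
    (hKM : ∀ (A : X →L[ℂ] X) (B : U →L[ℂ] X),
      (∀ k : ℕ, x1 k = A (x0 k) + B (u0 k)) →
      ∀ k : ℕ, ‖(A + B.comp K) ^ k‖ ≤ M * γ ^ k)
    (p : X) (q : U) (hpq : adjoint Ξ0 p + adjoint Υ0 q = 0) :
    p + adjoint K q = 0 := by
  obtain ⟨z, hz⟩ := exists_ne (0 : X)
  set Δ : X →L[ℂ] X := (innerSL ℂ p).smulRight z with hΔ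
  set Γ : U →L[ℂ] X := (innerSL ℂ q).smulRight z with hΓ
  have hzero : ∀ k : ℕ, Δ (x0 k) + Γ (u0 k) = 0 := by
    intro k
    have h0 : (inner ℂ p (x0 k) : ℂ) + (inner ℂ q (u0 k) : ℂ) = 0 := by
      have h1 : (inner ℂ p (x0 k) : ℂ) = inner ℂ (adjoint Ξ0 p) (lp.single 2 k (1:ℂ)) := by
        rw [adjoint_inner_left, synthesis_single hΞ0]
      have h2 : (inner ℂ q (u0 k) : ℂ) = inner ℂ (adjoint Υ0 q) (lp.single 2 k (1:ℂ)) := by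
        rw [adjoint_inner_left, synthesis_single hΥ0]
      rw [h1, h2, ← inner_add_left, hpq, inner_zero_left]
    simp only [hΔ, hΓ, smulRight_apply, innerSL_apply_apply]
    rw [← add_smul, h0, zero_smul]
  have hR := pert As Bs hgen K M γ hKM Δ Γ hzero
  have happ : ∀ x : X, (inner ℂ (p + adjoint K q) x : ℂ) • z = 0 := by
    intro x
    have := congrFun (congrArg (fun (T : X →L[ℂ] X) => (T : X → X)) hR) x
    simp only [add_apply, comp_apply, zero_apply, hΔ, hΓ, smulRight_apply,
      innerSL_apply_apply] at this
    rw [inner_add_left, adjoint_inner_left, add_smul]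
    exact this
  have := happ (p + adjoint K q)
  rw [smul_eq_zero] at this
  rcases this with h | h
  · rwa [inner_self_eq_zero] at h
  · exact absurd h hz


lemma inner_TadjT (T : l2 →L[ℂ] X) (y : X) :
    (inner ℂ (T (adjoint T y)) y : ℂ) = ((‖adjoint T y‖ : ℝ) : ℂ) ^ 2 := by
  rw [← adjoint_inner_right, inner_self_eq_norm_sq_to_K]
  norm_cast

lemma exists_right_inv [Nontrivial X] {T : l2 →L[ℂ] X} {c : ℝ}
    (hc : ∀ y : X, ‖y‖ ≤ c * ‖adjoint T y‖) :
    ∃ W : X →L[ℂ] l2, ∀ y, T (W y) = y := by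
  obtain ⟨y0, hy0⟩ := exists_ne (0 : X)
  have hy0n : 0 < ‖y0‖ := norm_pos_iff.mpr hy0
  have hcpos : 0 < c := by nlinarith [hc y0, norm_nonneg (adjoint T y0)]
  set G : X →L[ℂ] X := T ∘L adjoint T with hGdef
  have hG : ∀ y, (inner ℂ (G y) y : ℂ) = ((‖adjoint T y‖ : ℝ) : ℂ) ^ 2 := fun y => inner_TadjT T y
  have hGlow : ∀ y, ‖y‖ ≤ c ^ 2 * ‖G y‖ := by
    intro y
    rcases eq_or_ne y 0 with rfl | hy
    · simp
    · have h1 : ‖adjoint T y‖ ^ 2 = Complex.re (inner ℂ (G y) y) := by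
        rw [hG, ← Complex.ofReal_pow, Complex.ofReal_re]
      have h2 : Complex.re (inner ℂ (G y) y : ℂ) ≤ ‖G y‖ * ‖y‖ := by
        calc Complex.re (inner ℂ (G y) y : ℂ) ≤ ‖(inner ℂ (G y) y : ℂ)‖ := Complex.re_le_norm _
          _ ≤ ‖G y‖ * ‖y‖ := norm_inner_le_norm _ _
      have h3 := hc y
      have h4 : 0 < ‖y‖ := norm_pos_iff.mpr hy
      nlinarith [norm_nonneg (adjoint T y), norm_nonneg (G y)]
  have hker : LinearMap.ker (G : X →ₗ[ℂ] X) = ⊥ := by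
    rw [eq_bot_iff]
    intro y hy
    have hGy : G y = 0 := hy
    have h5 := hGlow y
    rw [hGy, norm_zero, mul_zero] at h5
    simpa [Submodule.mem_bot, ← norm_le_zero_iff] using h5
  have hclosed : IsClosed (Set.range G) := by
    have hal : AntilipschitzWith (c ^ 2).toNNReal G := by
      refine G.antilipschitz_of_bound fun x => ?_
      rw [Real.coe_toNNReal _ (by positivity)]
      exact hGlow x
    exact hal.isClosed_range G.uniformContinuous
  have hdense : (LinearMap.range (G : X →ₗ[ℂ] X))ᗮ = ⊥ := by
    rw [eq_bot_iff]
    intro y hy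
    have h0 : (inner ℂ (G y) y : ℂ) = 0 := by
      rw [Submodule.mem_orthogonal] at hy
      exact hy (G y) (LinearMap.mem_range_self _ y)
    have hadj : ‖adjoint T y‖ = 0 := by
      have h6 := hG y
      rw [h0] at h6
      have h7 : ((‖adjoint T y‖ : ℝ) : ℂ) ^ 2 = 0 := h6.symm
      have h8 : (‖adjoint T y‖ : ℝ) ^ 2 = 0 := by exact_mod_cast h7
      exact pow_eq_zero_iff (n := 2) (by norm_num) |>.mp h8
    have h9 := hc y
    rw [hadj, mul_zero] at h9
    simpa [Submodule.mem_bot, ← norm_le_zero_iff] using h9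
  have hrange : LinearMap.range (G : X →ₗ[ℂ] X) = ⊤ := by
    have h1 : (LinearMap.range (G : X →ₗ[ℂ] X)).topologicalClosure = LinearMap.range (G : X →ₗ[ℂ] X) :=
      IsClosed.submodule_topologicalClosure_eq (by rwa [LinearMap.coe_range])
    rw [← h1, ← Submodule.orthogonal_orthogonal_eq_closure, hdense,
      Submodule.bot_orthogonal_eq_top]
  set E := ContinuousLinearEquiv.ofBijective G hker hrange with hE
  refine ⟨adjoint T ∘L (E.symm : X →L[ℂ] X), fun y => ?_⟩
  have h1 : T (adjoint T (E.symm y)) = G (E.symm y) := rfl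
  have h2 : G (E.symm y) = E (E.symm y) := by
    rw [hE, ContinuousLinearEquiv.coeFn_ofBijective]
  simp only [comp_apply, ContinuousLinearEquiv.coe_coe, h1, h2,
    ContinuousLinearEquiv.apply_symm_apply]

lemma pos_bound {Ξ0 : l2 →L[ℂ] X} {c : ℝ} (hc0 : 0 ≤ c)
    (hpos : ((c ^ 2 : ℂ) • ((adjoint Ξ0 ∘L Ξ0) ^ 2) - adjoint Ξ0 ∘L Ξ0).IsPositive) :
    ∀ w : l2, ‖Ξ0 w‖ ≤ c * ‖adjoint Ξ0 (Ξ0 w)‖ := by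
  intro w
  have h := hpos.2 w
  set P : l2 →L[ℂ] l2 := adjoint Ξ0 ∘L Ξ0 with hP
  have h1 : (inner ℂ ((P ^ 2) w) w : ℂ) = ((‖P w‖ : ℝ) : ℂ) ^ 2 := by
    rw [pow_two, mul_apply_eq_comp]
    have e1 : P (P w) = adjoint Ξ0 (Ξ0 (P w)) := rfl
    rw [e1, adjoint_inner_left]
    have e2 : Ξ0 (P w) = Ξ0 (adjoint Ξ0 (Ξ0 w)) := rfl
    rw [e2, inner_TadjT]
    rfl
  have h2 : (inner ℂ (P w) w : ℂ) = ((‖Ξ0 w‖ : ℝ) : ℂ) ^ 2 := by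
    have e1 : P w = adjoint Ξ0 (Ξ0 w) := rfl
    rw [e1, adjoint_inner_left, inner_self_eq_norm_sq_to_K]
    norm_cast
  have h3 : ((c ^ 2 : ℂ) • (P ^ 2) - P).reApplyInnerSelf w
      = c ^ 2 * ‖P w‖ ^ 2 - ‖Ξ0 w‖ ^ 2 := by
    rw [reApplyInnerSelf]
    rw [sub_apply, smul_apply, inner_sub_left, inner_smul_left, h1, h2]
    simp [← Complex.ofReal_pow]
  rw [h3] at h
  have h4 : ‖Ξ0 w‖ ^ 2 ≤ (c * ‖P w‖) ^ 2 := by nlinarith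
  calc ‖Ξ0 w‖ = √(‖Ξ0 w‖ ^ 2) := by rw [Real.sqrt_sq (norm_nonneg _)]
    _ ≤ √((c * ‖P w‖) ^ 2) := Real.sqrt_le_sqrt h4
    _ = c * ‖P w‖ := Real.sqrt_sq (by positivity)

lemma orth_ker_le_range_adj {T : l2 →L[ℂ] X} {c : ℝ} (hc0 : 0 ≤ c)
    (hc : ∀ y : X, ‖y‖ ≤ c * ‖adjoint T y‖) :
    (LinearMap.ker (T : l2 →ₗ[ℂ] X))ᗮ ≤ LinearMap.range (adjoint T : X →ₗ[ℂ] l2) := by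
  have hclosed : IsClosed (Set.range (adjoint T)) := by
    have hal : AntilipschitzWith c.toNNReal (adjoint T) :=
      (adjoint T).antilipschitz_of_bound fun x => by rw [Real.coe_toNNReal _ hc0]; exact hc x
    exact hal.isClosed_range (adjoint T).uniformContinuous
  have h1 : (LinearMap.range (adjoint T : X →ₗ[ℂ] l2))ᗮ ≤ LinearMap.ker (T : l2 →ₗ[ℂ] X) := by
    intro y hy
    rw [Submodule.mem_orthogonal] at hy
    have h2 : ∀ p : X, (inner ℂ p (T y) : ℂ) = 0 := by
      intro p
      rw [← adjoint_inner_left]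
      exact hy _ (LinearMap.mem_range_self _ p)
    rw [LinearMap.mem_ker]
    have h3 := h2 (T y)
    rwa [inner_self_eq_zero] at h3
  calc (LinearMap.ker (T : l2 →ₗ[ℂ] X))ᗮ ≤ ((LinearMap.range (adjoint T : X →ₗ[ℂ] l2))ᗮ)ᗮ := Submodule.orthogonal_le h1
    _ = (LinearMap.range (adjoint T : X →ₗ[ℂ] l2)).topologicalClosure :=
        Submodule.orthogonal_orthogonal_eq_closure (LinearMap.range (adjoint T : X →ₗ[ℂ] l2))
    _ = LinearMap.range (adjoint T : X →ₗ[ℂ] l2) :=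
        IsClosed.submodule_topologicalClosure_eq (by rwa [LinearMap.coe_range])

lemma dense_range_of_adj_inj {T : l2 →L[ℂ] X}
    (h : ∀ y : X, adjoint T y = 0 → y = 0) (y : X) {ε : ℝ} (hε : 0 < ε) :
    ∃ w : l2, ‖y - T w‖ < ε := by
  have horth : (LinearMap.range (T : l2 →ₗ[ℂ] X))ᗮ = ⊥ := by
    rw [eq_bot_iff]
    intro v hv
    rw [Submodule.mem_orthogonal] at hv
    have h2 : adjoint T v = 0 → v = 0 := h v
    have h3 : adjoint T v = 0 := by
      have h4 : (inner ℂ (adjoint T v) (adjoint T v) : ℂ) = 0 := by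
        rw [adjoint_inner_right]
        exact hv _ (LinearMap.mem_range_self _ _)
      rwa [inner_self_eq_zero] at h4
    simpa [Submodule.mem_bot] using h2 h3
  have htop : (LinearMap.range (T : l2 →ₗ[ℂ] X)).topologicalClosure = ⊤ := by
    rw [← Submodule.orthogonal_orthogonal_eq_closure, horth, Submodule.bot_orthogonal_eq_top]
  have hy : y ∈ closure (LinearMap.range (T : l2 →ₗ[ℂ] X) : Set X) := by
    rw [← Submodule.topologicalClosure_coe, htop]
    trivial
  rw [Metric.mem_closure_iff] at hy
  obtain ⟨b, hb, hdist⟩ := hy ε hε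
  obtain ⟨w, rfl⟩ := hb
  exact ⟨w, by rwa [← dist_eq_norm]⟩

lemma lower_bound {Ξ0 : l2 →L[ℂ] X} {c : ℝ} (hc0 : 0 ≤ c)
    (hker : ∀ y : X, adjoint Ξ0 y = 0 → y = 0)
    (hbnd : ∀ w : l2, ‖Ξ0 w‖ ≤ c * ‖adjoint Ξ0 (Ξ0 w)‖) :
    ∀ y : X, ‖y‖ ≤ c * ‖adjoint Ξ0 y‖ := by
  intro y
  refine le_of_forall_pos_le_add fun δ hδ => ?_
  have hden : 0 < 1 + c * ‖adjoint Ξ0‖ := by positivity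
  set ε := δ / (1 + c * ‖adjoint Ξ0‖) with hε
  have hεpos : 0 < ε := by positivity
  obtain ⟨w, hw⟩ := dense_range_of_adj_inj hker y hεpos
  have h1 : ‖y‖ ≤ ‖y - Ξ0 w‖ + ‖Ξ0 w‖ := by
    calc ‖y‖ = ‖(y - Ξ0 w) + Ξ0 w‖ := by rw [sub_add_cancel]
      _ ≤ ‖y - Ξ0 w‖ + ‖Ξ0 w‖ := norm_add_le _ _
  have h2 := hbnd w
  have h3 : ‖adjoint Ξ0 (Ξ0 w)‖ ≤ ‖adjoint Ξ0 y‖ + ‖adjoint Ξ0‖ * ‖y - Ξ0 w‖ := by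
    calc ‖adjoint Ξ0 (Ξ0 w)‖ = ‖adjoint Ξ0 y - adjoint Ξ0 (y - Ξ0 w)‖ := by
          rw [← map_sub, sub_sub_cancel]
      _ ≤ ‖adjoint Ξ0 y‖ + ‖adjoint Ξ0 (y - Ξ0 w)‖ := norm_sub_le _ _
      _ ≤ ‖adjoint Ξ0 y‖ + ‖adjoint Ξ0‖ * ‖y - Ξ0 w‖ := by
          have := (adjoint Ξ0).le_opNorm (y - Ξ0 w)
          linarith
  have heq : ε * (1 + c * ‖adjoint Ξ0‖) = δ := by
    rw [hε]; field_simp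
  nlinarith [norm_nonneg (adjoint Ξ0), mul_nonneg hc0 (norm_nonneg (adjoint Ξ0)),
    mul_le_mul_of_nonneg_left h3 hc0]

lemma reApply_eq {Ξ0 : l2 →L[ℂ] X} (c : ℝ) (w : l2) :
    ((c ^ 2 : ℂ) • ((adjoint Ξ0 ∘L Ξ0) ^ 2) - adjoint Ξ0 ∘L Ξ0).reApplyInnerSelf w
      = c ^ 2 * ‖(adjoint Ξ0 ∘L Ξ0) w‖ ^ 2 - ‖Ξ0 w‖ ^ 2 := by
  set P : l2 →L[ℂ] l2 := adjoint Ξ0 ∘L Ξ0 with hP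
  have h1 : (inner ℂ ((P ^ 2) w) w : ℂ) = ((‖P w‖ : ℝ) : ℂ) ^ 2 := by
    rw [pow_two, mul_apply_eq_comp]
    have e1 : P (P w) = adjoint Ξ0 (Ξ0 (P w)) := rfl
    rw [e1, adjoint_inner_left]
    have e2 : Ξ0 (P w) = Ξ0 (adjoint Ξ0 (Ξ0 w)) := rfl
    rw [e2, inner_TadjT]
    rfl
  have h2 : (inner ℂ (P w) w : ℂ) = ((‖Ξ0 w‖ : ℝ) : ℂ) ^ 2 := by
    have e1 : P w = adjoint Ξ0 (Ξ0 w) := rfl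
    rw [e1, adjoint_inner_left, inner_self_eq_norm_sq_to_K]
    norm_cast
  rw [reApplyInnerSelf, sub_apply, smul_apply, inner_sub_left, inner_smul_left, h1, h2]
  simp [← Complex.ofReal_pow]

lemma selfadj_expr {Ξ0 : l2 →L[ℂ] X} (c : ℝ) :
    IsSelfAdjoint ((c ^ 2 : ℂ) • ((adjoint Ξ0 ∘L Ξ0) ^ 2) - adjoint Ξ0 ∘L Ξ0) := by
  have hP : IsSelfAdjoint (adjoint Ξ0 ∘L Ξ0) := by
    rw [IsSelfAdjoint, star_eq_adjoint, adjoint_comp, adjoint_adjoint]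
  have hP2 : IsSelfAdjoint ((adjoint Ξ0 ∘L Ξ0) ^ 2) := hP.pow 2
  refine IsSelfAdjoint.sub ?_ hP
  rw [IsSelfAdjoint, star_smul, hP2.star_eq]
  congr 1
  simp [Complex.star_def]

lemma exists_pseudo_right_inv {H : Type} [NormedAddCommGroup H] [InnerProductSpace ℂ H]
    {U : Type} [NormedAddCommGroup U] [InnerProductSpace ℂ U] [FiniteDimensional ℂ U]
    (T : H →L[ℂ] U) :
    ∃ R : U →L[ℂ] H, ∀ u ∈ LinearMap.range (T : H →ₗ[ℂ] U), T (R u) = u := by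
  set Vs : Submodule ℂ U := LinearMap.range (T : H →ₗ[ℂ] U) with hVs
  let b := Module.Basis.ofVectorSpace ℂ ↥Vs
  choose f hf using fun i => LinearMap.mem_range.mp (b i).2
  let ρ : ↥Vs →ₗ[ℂ] H := b.constr ℂ f
  have hρ : ∀ v : ↥Vs, T (ρ v) = ↑v := by
    intro v
    have hext : ((T : H →ₗ[ℂ] U).comp ρ) = Vs.subtype := by
      refine b.ext fun i => ?_
      simp only [LinearMap.comp_apply, ρ, Module.Basis.constr_basis]
      rw [hf i]
      rfl
    calc T (ρ v) = ((T : H →ₗ[ℂ] U).comp ρ) v := rfl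
      _ = ↑v := by rw [hext]; rfl
  let ρc : ↥Vs →L[ℂ] H := LinearMap.toContinuousLinearMap ρ
  refine ⟨ρc ∘L (Vs.orthogonalProjectionOnto), fun u hu => ?_⟩
  show T (ρc (Vs.orthogonalProjectionOnto u)) = u
  have hproj : Vs.orthogonalProjectionOnto u = ⟨u, hu⟩ := by
    have := Submodule.orthogonalProjectionOnto_mem_subspace_eq_self (K := Vs) ⟨u, hu⟩
    simpa using this
  rw [hproj]
  exact hρ ⟨u, hu⟩

lemma orth_orth {U : Type} [NormedAddCommGroup U] [InnerProductSpace ℂ U]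
    [FiniteDimensional ℂ U] (V : Submodule ℂ U) : Vᗮᗮ = V :=
  Submodule.orthogonal_orthogonal V

end Aux

theorem stmt_9
    {X : Type} [NormedAddCommGroup X] [InnerProductSpace ℂ X] [CompleteSpace X] [Nontrivial X]
    {U : Type} [NormedAddCommGroup U] [InnerProductSpace ℂ U] [CompleteSpace U] [Nontrivial U]
    [FiniteDimensional ℂ U]
    (x1 x0 : ℕ → X) (u0 : ℕ → U)
    (hx1B : Bessel x1) (hx0B : Bessel x0) (hu0B : Bessel u0)
    (Ξ1 Ξ0 : l2 →L[ℂ] X) (Υ0 : l2 →L[ℂ] U)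
    (hΞ1 : IsSynthesis x1 Ξ1) (hΞ0 : IsSynthesis x0 Ξ0) (hΥ0 : IsSynthesis u0 Υ0)
    (As : X →L[ℂ] X) (Bs : U →L[ℂ] X)
    (hgen : ∀ k : ℕ, x1 k = As (x0 k) + Bs (u0 k))
    (γ : ℝ) (hγ0 : 0 < γ) (hγ1 : γ < 1) :
    -- (i)
    ((∃ (K : X →L[ℂ] U) (M : ℝ), 1 ≤ M ∧ ∀ (A : X →L[ℂ] X) (B : U →L[ℂ] X),
          (∀ k : ℕ, x1 k = A (x0 k) + B (u0 k)) →
          ∀ k : ℕ, ‖(A + B.comp K) ^ k‖ ≤ M * γ ^ k) ∧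
      (∃ c : ℝ, 0 ≤ c ∧
        ((c ^ 2 : ℂ) • ((adjoint Ξ0 ∘L Ξ0) ^ 2) - adjoint Ξ0 ∘L Ξ0).IsPositive))
    ↔
    -- (ii)
    (IsFrame x0 ∧
      ∃ Ξd : X →L[ℂ] l2, Ξ0 ∘L Ξd = ContinuousLinearMap.id ℂ X ∧
        ∃ M : ℝ, 1 ≤ M ∧ ∀ k : ℕ, ‖(Ξ1 ∘L Ξd) ^ k‖ ≤ M * γ ^ k) := by
  constructor
  · rintro ⟨⟨K, M, hM, hKM⟩, c, hc0, hpos⟩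
    -- ker of adjoint is trivial (density of range)
    have hker : ∀ y : X, adjoint Ξ0 y = 0 → y = 0 := by
      intro y hy
      have h := hstar_lemma hΞ0 hΥ0 As Bs hgen K M γ hKM y 0
        (by rw [hy, map_zero, add_zero])
      simpa using h
    have hbnd := pos_bound hc0 hpos
    have hbnd' : ∀ w : l2, ‖Ξ0 w‖ ≤ c * ‖adjoint Ξ0 (Ξ0 w)‖ := hbnd
    have hlow := lower_bound hc0 hker hbnd'
    -- c is strictly positive
    obtain ⟨y0, hy0⟩ := exists_ne (0 : X)
    have hy0n : 0 < ‖y0‖ := norm_pos_iff.mpr hy0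
    have hcpos : 0 < c := by nlinarith [hlow y0, norm_nonneg (adjoint Ξ0 y0)]
    -- frame property
    obtain ⟨α, hα, hbessel⟩ := hx0B
    have hframe : IsFrame x0 := by
      refine ⟨α, (c ^ 2)⁻¹, hα, by positivity, fun y => ⟨?_, hbessel y⟩⟩
      rw [tsum_adj hΞ0 y]
      rw [inv_mul_le_iff₀ (by positivity)]
      have := hlow y
      nlinarith [norm_nonneg y, norm_nonneg (adjoint Ξ0 y), mul_nonneg hc0 hc0]
    -- right inverse of Ξ0
    obtain ⟨W, hW⟩ := exists_right_inv hlow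
    have hstar : ∀ (p : X) (q : U), adjoint Ξ0 p + adjoint Υ0 q = 0 → p + adjoint K q = 0 :=
      fun p q hpq => hstar_lemma hΞ0 hΥ0 As Bs hgen K M γ hKM p q hpq
    -- the kernel of Ξ0 and the image of it under Υ0
    set J : Submodule ℂ l2 := LinearMap.ker (Ξ0 : l2 →ₗ[ℂ] X) with hJ
    set T : ↥J →L[ℂ] U := Υ0 ∘L J.subtypeL with hT
    set Vs : Submodule ℂ U := LinearMap.range (T : ↥J →ₗ[ℂ] U) with hVs
    obtain ⟨R, hTR⟩ := exists_pseudo_right_inv T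
    -- membership of K x - Υ0 (W x) in Vs
    have hmem : ∀ x : X, K x - Υ0 (W x) ∈ Vs := by
      intro x
      have horth : Vsᗮᗮ = Vs := orth_orth Vs
      rw [← horth, Submodule.mem_orthogonal]
      intro q hq
      have h1 : adjoint Υ0 q ∈ Jᗮ := by
        rw [Submodule.mem_orthogonal]
        intro w hw
        rw [adjoint_inner_right]
        exact (Submodule.mem_orthogonal Vs q).mp hq _ ⟨⟨w, hw⟩, rfl⟩
      have h2 : adjoint Υ0 q ∈ LinearMap.range (adjoint Ξ0 : X →ₗ[ℂ] l2) :=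
        orth_ker_le_range_adj hcpos.le hlow h1
      obtain ⟨p0, hp0 : adjoint Ξ0 p0 = adjoint Υ0 q⟩ := h2
      have h3 := hstar (-p0) q (by rw [map_neg, hp0]; abel)
      have h4 : p0 = adjoint K q := neg_add_eq_zero.mp h3
      show (inner ℂ q (K x - Υ0 (W x)) : ℂ) = 0
      rw [inner_sub_right]
      have h5 : (inner ℂ q (K x) : ℂ) = inner ℂ p0 x := by
        rw [← adjoint_inner_left K, ← h4]
      have h6 : (inner ℂ q (Υ0 (W x)) : ℂ) = inner ℂ p0 x := by
        rw [← adjoint_inner_left Υ0, ← hp0, adjoint_inner_left, hW]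
      rw [h5, h6, sub_self]
    -- the stabilizing right inverse
    set Ξd : X →L[ℂ] l2 := W + J.subtypeL ∘L (R ∘L (K - Υ0 ∘L W)) with hΞd
    have hΞ0Ξd : ∀ x : X, Ξ0 (Ξd x) = x := by
      intro x
      have hmemJ : (↑(R ((K - Υ0 ∘L W) x)) : l2) ∈ J := (R ((K - Υ0 ∘L W) x)).2
      have hk0 : Ξ0 (↑(R ((K - Υ0 ∘L W) x)) : l2) = 0 := LinearMap.mem_ker.mp hmemJ
      simp only [hΞd, add_apply, comp_apply, Submodule.coe_subtypeL', Submodule.subtype_apply]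
      rw [map_add, hW, hk0, add_zero]
    have hΥ0Ξd : ∀ x : X, Υ0 (Ξd x) = K x := by
      intro x
      have e1 : Υ0 (Ξd x) = Υ0 (W x) + T (R ((K - Υ0 ∘L W) x)) := by
        simp only [hΞd, add_apply, comp_apply, map_add]
        rfl
      have e2 : (K - Υ0 ∘L W) x = K x - Υ0 (W x) := rfl
      rw [e1, e2, hTR _ (hmem x), add_sub_cancel]
    refine ⟨hframe, Ξd, ?_, M, hM, ?_⟩
    · ext x
      simp [hΞ0Ξd x]
    · have hF : Ξ1 ∘L Ξd = As + Bs.comp K := by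
        ext x
        have h1 := sum_identity hΞ1 hΞ0 hΥ0 As Bs hgen (Ξd x)
        rw [hΞ0Ξd x, hΥ0Ξd x] at h1
        simpa using h1.symm
      rw [hF]
      exact hKM As Bs hgen
  · rintro ⟨⟨α, β, hα, hβ, hfr⟩, Ξd, hΞdinv, M, hM, hpow⟩
    have hΞ0Ξd : ∀ x : X, Ξ0 (Ξd x) = x := fun x => by
      have := ContinuousLinearMap.ext_iff.mp hΞdinv x
      simpa using this
    constructor
    · refine ⟨Υ0 ∘L Ξd, M, hM, ?_⟩
      intro A B hcons k
      have hAB : A + B.comp (Υ0 ∘L Ξd) = Ξ1 ∘L Ξd := by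
        ext x
        have h1 := sum_identity hΞ1 hΞ0 hΥ0 A B hcons (Ξd x)
        rw [hΞ0Ξd x] at h1
        simpa using h1
      rw [hAB]
      exact hpow k
    · refine ⟨(Real.sqrt β)⁻¹, by positivity, (selfadj_expr _).isSymmetric, fun w => ?_⟩
      rw [reApply_eq]
      have hfl := (hfr (Ξ0 w)).1
      rw [tsum_adj hΞ0 (Ξ0 w)] at hfl
      have hc2 : ((Real.sqrt β)⁻¹) ^ 2 = β⁻¹ := by
        rw [inv_pow, Real.sq_sqrt hβ.le]
      rw [hc2]
      have hβi : 0 < β⁻¹ := by positivity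
      have h2 : ‖adjoint Ξ0 (Ξ0 w)‖ ^ 2 = ‖(adjoint Ξ0 ∘L Ξ0) w‖ ^ 2 := rfl
      rw [← h2]
      rw [sub_nonneg, ← mul_le_mul_iff_of_pos_left hβ, ← mul_assoc, mul_inv_cancel₀ hβ.ne',
        one_mul]
      exact hfl
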